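/- Let X be a wide-sense stationary, mean-square continuous complex random process with spectral measure μ and covariance R_X(t) = ∫_ℝ e^{iλt} dμ(λ). For 0 < α < 1, the condition ∫_ℝ |λ|^{2α} dμ(λ) < ∞ holds if and only if ∫_ℝ |R_X(0) − R_X(h)| |h|^{−1−2α} dh < ∞. -/

import Mathlib

open MeasureTheory
open scoped ENNReal

open Set

lemma cos_meas (h : ℝ) : Measurable (fun lam : ℝ => 1 - Real.cos (lam * h)) :=
  (continuous_const.sub (Real.continuous_cos.comp (continuous_id.mul continuous_const))).measurable

noncomputable def fcos (α : ℝ) : ℝ → ℝ := fun u => (1 - Real.cos u) * |u| ^ (-1 - 2 * α)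

lemma fcos_meas (α : ℝ) : Measurable (fcos α) := by
  unfold fcos
  have h1 : Measurable (fun u : ℝ => 1 - Real.cos u) :=
    (continuous_const.sub Real.continuous_cos).measurable
  have h2 : Measurable (fun u : ℝ => |u| ^ (-1 - 2 * α)) := by measurability
  exact h1.mul h2

lemma fcos_nonneg (α : ℝ) (u : ℝ) : 0 ≤ fcos α u :=
  mul_nonneg (by linarith [Real.cos_le_one u]) (Real.rpow_nonneg (abs_nonneg u) _)

lemma fcos_even (α : ℝ) (u : ℝ) : fcos α (-u) = fcos α u := by
  simp [fcos, Real.cos_neg]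

lemma fcos_integrable (α : ℝ) (hα0 : 0 < α) (hα1 : α < 1) :
    Integrable (fcos α) (volume : Measure ℝ) := by
  have hmeas := fcos_meas α
  -- on (0,1)
  have h01 : IntegrableOn (fcos α) (Ioo 0 1) := by
    have hmaj : IntegrableOn (fun u : ℝ => (1/2 : ℝ) * u ^ (1 - 2 * α)) (Ioo (0:ℝ) 1) :=
      ((intervalIntegral.integrableOn_Ioo_rpow_iff one_pos).2 (by linarith)).const_mul _
    refine Integrable.mono' hmaj hmeas.aestronglyMeasurable ?_
    filter_upwards [ae_restrict_mem measurableSet_Ioo] with u hu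
    have hu0 : (0:ℝ) < u := hu.1
    rw [Real.norm_eq_abs, abs_of_nonneg (fcos_nonneg α u)]
    have h1c : 1 - Real.cos u ≤ u ^ 2 / 2 := by
      have := Real.one_sub_sq_div_two_le_cos (x := u); linarith
    have habs : |u| = u := abs_of_pos hu0
    calc fcos α u ≤ (u ^ 2 / 2) * u ^ (-1 - 2 * α) := by
          rw [fcos, habs]
          exact mul_le_mul_of_nonneg_right h1c (Real.rpow_nonneg hu0.le _)
      _ = (1/2 : ℝ) * u ^ (1 - 2 * α) := by
          rw [show (u:ℝ) ^ 2 = u ^ (2:ℝ) by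
            rw [← Real.rpow_natCast u 2]; norm_num]
          rw [div_mul_eq_mul_div, ← Real.rpow_add hu0]
          ring_nf
  -- on [1, ∞)
  have h1i : IntegrableOn (fcos α) (Ici 1) := by
    rw [integrableOn_Ici_iff_integrableOn_Ioi]
    have hmaj : IntegrableOn (fun u : ℝ => (2 : ℝ) * u ^ (-1 - 2 * α)) (Ioi (1:ℝ)) :=
      (integrableOn_Ioi_rpow_of_lt (by linarith) one_pos).const_mul _
    refine Integrable.mono' hmaj hmeas.aestronglyMeasurable ?_
    filter_upwards [ae_restrict_mem measurableSet_Ioi] with u hu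
    have hu0 : (0:ℝ) < u := lt_trans one_pos hu
    rw [Real.norm_eq_abs, abs_of_nonneg (fcos_nonneg α u), fcos, abs_of_pos hu0]
    have h1c : 1 - Real.cos u ≤ 2 := by linarith [Real.neg_one_le_cos u]
    exact mul_le_mul_of_nonneg_right h1c (Real.rpow_nonneg hu0.le _)
  have hpos : IntegrableOn (fcos α) (Ici 0) := by
    rw [integrableOn_Ici_iff_integrableOn_Ioi, show Ioi (0:ℝ) = Ioo 0 1 ∪ Ici 1 by
      rw [Set.Ioo_union_Ici_eq_Ioi one_pos]]
    exact h01.union h1i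
  have hneg : IntegrableOn (fcos α) (Iic 0) := by
    have h_map_neg : (volume.restrict (Ici (0:ℝ))).map Neg.neg = volume.restrict (Iic 0) := by
      conv => rhs; rw [← Measure.map_neg_eq_self (volume : Measure ℝ),
        measurableEmbedding_neg.restrict_map]
      simp
    rw [IntegrableOn, ← h_map_neg, measurableEmbedding_neg.integrable_map_iff]
    have : (fcos α ∘ Neg.neg) = fcos α := funext fun u => fcos_even α u
    rw [this]
    exact hpos
  rw [← integrableOn_univ, ← Set.Iic_union_Ici (a := (0:ℝ))]
  exact hneg.union hpos

/-- The scaling constant. -/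
noncomputable def Cα (α : ℝ) : ℝ≥0∞ := ∫⁻ u : ℝ, ENNReal.ofReal (fcos α u)

lemma Cα_lt_top (α : ℝ) (hα0 : 0 < α) (hα1 : α < 1) : Cα α < ⊤ :=
  (fcos_integrable α hα0 hα1).lintegral_lt_top

lemma Cα_pos (α : ℝ) (hα0 : 0 < α) : 0 < Cα α := by
  have hsub : ENNReal.ofReal (Real.pi ^ (-1 - 2 * α)) * volume (Icc (Real.pi/2) Real.pi)
      ≤ Cα α := by
    rw [← setLIntegral_const (Icc (Real.pi/2) Real.pi) _]
    calc ∫⁻ _u in Icc (Real.pi/2) Real.pi, ENNReal.ofReal (Real.pi ^ (-1 - 2 * α))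
        ≤ ∫⁻ u in Icc (Real.pi/2) Real.pi, ENNReal.ofReal (fcos α u) := by
          refine setLIntegral_mono ((fcos_meas α).ennreal_ofReal) fun u hu => ?_
          refine ENNReal.ofReal_le_ofReal ?_
          have hu1 : Real.pi/2 ≤ u := hu.1
          have hu2 : u ≤ Real.pi := hu.2
          have hu0 : (0:ℝ) < u := lt_of_lt_of_le (by positivity) hu1
          have hc : Real.cos u ≤ 0 :=
            Real.cos_nonpos_of_pi_div_two_le_of_le hu1 (by linarith [Real.pi_pos])
          have h1 : (1:ℝ) ≤ 1 - Real.cos u := by linarith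
          have h2 : Real.pi ^ (-1 - 2 * α) ≤ |u| ^ (-1 - 2 * α) := by
            rw [abs_of_pos hu0]
            exact Real.rpow_le_rpow_of_nonpos hu0 hu2 (by linarith)
          calc Real.pi ^ (-1 - 2 * α) ≤ |u| ^ (-1 - 2 * α) := h2
            _ = 1 * |u| ^ (-1 - 2 * α) := (one_mul _).symm
            _ ≤ (1 - Real.cos u) * |u| ^ (-1 - 2 * α) :=
                mul_le_mul_of_nonneg_right h1 (Real.rpow_nonneg (abs_nonneg u) _)
      _ ≤ Cα α := setLIntegral_le_lintegral _ _
  refine lt_of_lt_of_le ?_ hsub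
  apply ENNReal.mul_pos
  · simp only [ne_eq, ENNReal.ofReal_eq_zero, not_le]
    exact Real.rpow_pos_of_pos Real.pi_pos _
  · rw [Real.volume_Icc]
    simp only [ne_eq, ENNReal.ofReal_eq_zero, not_le]
    linarith [Real.pi_pos]

lemma inner_scale (α : ℝ) (hα0 : 0 < α) (lam : ℝ) :
    ∫⁻ h : ℝ, ENNReal.ofReal ((1 - Real.cos (lam * h)) * |h| ^ (-1 - 2 * α))
      = ENNReal.ofReal (|lam| ^ (2 * α)) * Cα α := by
  rcases eq_or_ne lam 0 with rfl | hlam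
  · simp only [zero_mul, Real.cos_zero, sub_self]
    rw [abs_zero, Real.zero_rpow (by positivity : (2*α) ≠ 0)]
    simp
  · have hl : (0:ℝ) < |lam| := abs_pos.2 hlam
    have key : ∀ h : ℝ, ENNReal.ofReal ((1 - Real.cos (lam * h)) * |h| ^ (-1 - 2 * α))
        = ENNReal.ofReal (fcos α (lam * h)) * ENNReal.ofReal (|lam| ^ (1 + 2 * α)) := by
      intro h
      rw [← ENNReal.ofReal_mul (fcos_nonneg α _)]
      congr 1
      rw [fcos, mul_assoc]
      congr 1
      rw [abs_mul, Real.mul_rpow (abs_nonneg lam) (abs_nonneg h),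
        mul_comm (|lam| ^ (-1 - 2 * α)), mul_assoc, ← Real.rpow_add hl,
        show (-1 - 2 * α) + (1 + 2 * α) = 0 by ring, Real.rpow_zero, mul_one]
    simp_rw [key]
    have hf : Measurable fun h : ℝ => ENNReal.ofReal (fcos α (lam * h)) :=
      ((fcos_meas α).comp (measurable_const_mul lam)).ennreal_ofReal
    rw [lintegral_mul_const _ hf]
    have hmap : ∫⁻ h : ℝ, ENNReal.ofReal (fcos α (lam * h))
        = ENNReal.ofReal |lam⁻¹| * Cα α := by
      have : ∫⁻ h : ℝ, ENNReal.ofReal (fcos α (lam * h))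
          = ∫⁻ u : ℝ, ENNReal.ofReal (fcos α u) ∂(Measure.map (lam * ·) volume) := by
        rw [lintegral_map (fcos_meas α).ennreal_ofReal (measurable_const_mul lam)]
      rw [this, Real.map_volume_mul_left hlam, lintegral_smul_measure]
      rfl
    rw [hmap, mul_right_comm]
    congr 1
    rw [← ENNReal.ofReal_mul (abs_nonneg _)]
    congr 1
    rw [abs_inv, ← Real.rpow_neg_one |lam|, mul_comm, ← Real.rpow_add hl,
      show (1 + 2 * α) + (-1) = 2 * α by ring]

lemma sin_meas (h : ℝ) : Measurable (fun lam : ℝ => Real.sin (lam * h)) :=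
  (Real.continuous_sin.comp (continuous_id.mul continuous_const)).measurable

lemma integ_cos (μ : Measure ℝ) [IsFiniteMeasure μ] (h : ℝ) :
    Integrable (fun lam : ℝ => 1 - Real.cos (lam * h)) μ := by
  refine Integrable.mono' (integrable_const 2) (cos_meas h).aestronglyMeasurable
    (Filter.Eventually.of_forall fun x => ?_)
  rw [Real.norm_eq_abs, abs_sub_comm]
  have := Real.neg_one_le_cos (x * h)
  have := Real.cos_le_one (x * h)
  rw [abs_le]; constructor <;> linarith

lemma normRA (μ : Measure ℝ) [IsFiniteMeasure μ]
    (hsymm : μ.map (fun lam => -lam) = μ)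
    (R : ℝ → ℂ)
    (hR : ∀ t : ℝ, R t = ∫ lam : ℝ, Complex.exp (Complex.I * lam * t) ∂μ) (h : ℝ) :
    ‖R 0 - R h‖ = ∫ lam, (1 - Real.cos (lam * h)) ∂μ := by
  have hsin : ∫ lam, Real.sin (lam * h) ∂μ = 0 := by
    have key : ∫ lam, Real.sin (lam * h) ∂μ = ∫ lam, Real.sin (-lam * h) ∂μ := by
      conv_lhs => rw [← hsymm]
      rw [integral_map (by fun_prop) (Measurable.aestronglyMeasurable (sin_meas h))]
    simp only [neg_mul, Real.sin_neg] at key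
    rw [integral_neg] at key
    linarith
  have hsin_int : Integrable (fun lam : ℝ => Real.sin (lam * h)) μ := by
    refine Integrable.mono' (integrable_const 1) (sin_meas h).aestronglyMeasurable
      (Filter.Eventually.of_forall fun x => ?_)
    rw [Real.norm_eq_abs]; exact Real.abs_sin_le_one _
  have hexp : Integrable (fun lam : ℝ => Complex.exp (Complex.I * lam * h)) μ := by
    refine Integrable.mono' (integrable_const 1) (Measurable.aestronglyMeasurable ?_)
      (Filter.Eventually.of_forall fun x => ?_)
    · exact (Complex.continuous_exp.comp
        ((continuous_const.mul Complex.continuous_ofReal).mul continuous_const)).measurable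
    · rw [show Complex.I * x * h = ((x * h : ℝ) : ℂ) * Complex.I by push_cast; ring]
      rw [Complex.norm_exp_ofReal_mul_I]
  have hR0 : R 0 = ∫ lam : ℝ, (1 : ℂ) ∂μ := by
    rw [hR 0]; congr 1; ext lam; simp
  have hsub : R 0 - R h = ((∫ lam, (1 - Real.cos (lam * h)) ∂μ : ℝ) : ℂ) := by
    rw [hR0, hR h, ← integral_sub (integrable_const 1) hexp]
    calc ∫ lam, ((1:ℂ) - Complex.exp (Complex.I * lam * h)) ∂μ
        = ∫ lam, (((1 - Real.cos (lam * h) : ℝ) : ℂ) - ((Real.sin (lam * h) : ℝ) : ℂ) * Complex.I) ∂μ := by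
          congr 1; ext lam
          rw [show Complex.I * lam * h = ((lam * h : ℝ) : ℂ) * Complex.I by push_cast; ring,
            Complex.exp_mul_I, ← Complex.ofReal_cos, ← Complex.ofReal_sin]
          push_cast; ring
      _ = (∫ lam, ((1 - Real.cos (lam * h) : ℝ) : ℂ) ∂μ) - (∫ lam, ((Real.sin (lam * h) : ℝ) : ℂ) ∂μ) * Complex.I := by
          have h1 : Integrable (fun lam : ℝ => ((1 - Real.cos (lam * h) : ℝ) : ℂ)) μ :=
            (integ_cos μ h).ofReal
          have h2 : Integrable (fun lam : ℝ => ((Real.sin (lam * h) : ℝ) : ℂ) * Complex.I) μ :=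
            hsin_int.ofReal.mul_const Complex.I
          rw [integral_sub h1 h2, integral_mul_const]
      _ = ((∫ lam, (1 - Real.cos (lam * h)) ∂μ : ℝ) : ℂ) := by
          have e1 : ∫ lam, ((1 - Real.cos (lam * h) : ℝ) : ℂ) ∂μ
              = ((∫ lam, (1 - Real.cos (lam * h)) ∂μ : ℝ) : ℂ) := by
            simpa using (ContinuousLinearMap.integral_comp_comm Complex.ofRealCLM
              (integ_cos μ h))
          have e2 : ∫ lam, ((Real.sin (lam * h) : ℝ) : ℂ) ∂μ
              = ((∫ lam, Real.sin (lam * h) ∂μ : ℝ) : ℂ) := by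
            simpa using (ContinuousLinearMap.integral_comp_comm Complex.ofRealCLM
              hsin_int)
          rw [e1, e2, hsin]
          simp
  rw [hsub, Complex.norm_real, Real.norm_eq_abs, abs_of_nonneg]
  refine integral_nonneg fun lam => ?_
  simp [Real.cos_le_one]

/-- Let `X` be a wide-sense stationary mean-square continuous complex process with
(finite, symmetric) spectral measure `μ` and covariance `R(t) = ∫ e^{iλt} dμ(λ)`.
For `0 < α < 1`, `∫ |λ|^{2α} dμ(λ) < ∞` iff `∫ |R(0) - R(h)| |h|^{-1-2α} dh < ∞`. -/
theorem stmt_5 {Ω : Type*} [MeasureSpace Ω] [IsProbabilityMeasure (volume : Measure Ω)]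
    (X : ℝ → Ω → ℂ) (hX2 : ∀ t, MemLp (X t) 2 (volume : Measure Ω))
    (μ : Measure ℝ) [IsFiniteMeasure μ]
    (hsymm : μ.map (fun lam => -lam) = μ)
    (R : ℝ → ℂ)
    (hmean : ∀ t, ∫ ω, X t ω ∂volume = 0)
    (hcov : ∀ t s : ℝ, ∫ ω, X t ω * (starRingEnd ℂ) (X s ω) ∂volume = R (t - s))
    (hR : ∀ t : ℝ, R t = ∫ lam : ℝ, Complex.exp (Complex.I * lam * t) ∂μ)
    (hcont : Filter.Tendsto (fun t : ℝ => ∫ ω, ‖X t ω - X 0 ω‖ ^ 2 ∂volume)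
      (nhds 0) (nhds 0))
    (α : ℝ) (hα0 : 0 < α) (hα1 : α < 1) :
    (∫⁻ lam : ℝ, ENNReal.ofReal (|lam| ^ (2 * α)) ∂μ) < ⊤ ↔
    (∫⁻ h : ℝ, ENNReal.ofReal (‖R 0 - R h‖ * |h| ^ (-1 - 2 * α)) ∂volume) < ⊤ := by
  have key : (∫⁻ h : ℝ, ENNReal.ofReal (‖R 0 - R h‖ * |h| ^ (-1 - 2 * α)) ∂volume)
      = (∫⁻ lam : ℝ, ENNReal.ofReal (|lam| ^ (2 * α)) ∂μ) * Cα α := by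
    have step1 : ∀ h : ℝ, ENNReal.ofReal (‖R 0 - R h‖ * |h| ^ (-1 - 2 * α))
        = ∫⁻ lam, ENNReal.ofReal ((1 - Real.cos (lam * h)) * |h| ^ (-1 - 2 * α)) ∂μ := by
      intro h
      rw [ENNReal.ofReal_mul (norm_nonneg _), normRA μ hsymm R hR h,
        ofReal_integral_eq_lintegral_ofReal (integ_cos μ h)
          (Filter.Eventually.of_forall fun lam => by
            simp [Real.cos_le_one (lam * h)]),
        ← lintegral_mul_const _ (cos_meas h).ennreal_ofReal]
      exact lintegral_congr fun lam =>
        (ENNReal.ofReal_mul (by linarith [Real.cos_le_one (lam * h)])).symm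
    simp_rw [step1]
    have hmeasF : AEMeasurable
        (Function.uncurry fun (h : ℝ) (lam : ℝ) =>
          ENNReal.ofReal ((1 - Real.cos (lam * h)) * |h| ^ (-1 - 2 * α)))
        ((volume : Measure ℝ).prod μ) := by
      have m2 : Measurable (fun x : ℝ => |x| ^ (-1 - 2 * α)) := by measurability
      have m1 : Measurable (fun p : ℝ × ℝ => 1 - Real.cos (p.2 * p.1)) :=
        (continuous_const.sub (Real.continuous_cos.comp
          (continuous_snd.mul continuous_fst))).measurable
      exact ((m1.mul (m2.comp measurable_fst)).ennreal_ofReal).aemeasurable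
    rw [lintegral_lintegral_swap hmeasF]
    have step2 : ∀ lam : ℝ,
        (∫⁻ h : ℝ, ENNReal.ofReal ((1 - Real.cos (lam * h)) * |h| ^ (-1 - 2 * α)) ∂volume)
          = ENNReal.ofReal (|lam| ^ (2 * α)) * Cα α := fun lam => inner_scale α hα0 lam
    simp_rw [step2]
    have hm : Measurable (fun lam : ℝ => ENNReal.ofReal (|lam| ^ (2 * α))) := by
      measurability
    exact lintegral_mul_const _ hm
  rw [key]
  constructor
  · intro hK
    exact ENNReal.mul_lt_top hK (Cα_lt_top α hα0 hα1)
  · intro hKC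
    by_contra hK
    rw [lt_top_iff_ne_top, not_not] at hK
    rw [hK, ENNReal.top_mul (ne_of_gt (Cα_pos α hα0))] at hKC
    exact (lt_irrefl _ hKC).elim
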